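/- arXiv:2605.10219 — 4 statements merged into one kernel-verified Lean document; each statement's English description precedes it below -/
import Mathlib

section
/- Let f : ℝ^d → ℝ be continuous and piecewise-affine. For any point w, there exist r > 0 and a positively homogeneous continuous piecewise-affine function φ such that f(w+u) = f(w) + φ(u) for all u with ‖u‖ ≤ r. -/
open scoped RealInnerProductSpace
open Filter Topology

noncomputable section

abbrev E (d : ℕ) := EuclideanSpace ℝ (Fin d)

/-- A function is piecewise-affine if `ℝ^d` is covered by finitely many polyhedral
cells, with `f` affine on every cell. -/
def IsPiecewiseAffine {d : ℕ} (f : E d → ℝ) : Prop :=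
  ∃ (n : ℕ) (C : Fin n → Set (E d)),
    (⋃ i, C i) = Set.univ ∧
    (∀ i, ∃ (m : ℕ) (a : Fin m → E d) (b : Fin m → ℝ),
      C i = {x | ∀ j, ⟪a j, x⟫ ≤ b j}) ∧
    (∀ i, ∃ (g : E d) (c : ℝ), ∀ x ∈ C i, f x = ⟪g, x⟫ + c)

def PositivelyHomogeneous {d : ℕ} (φ : E d → ℝ) : Prop :=
  ∀ t : ℝ, 0 ≤ t → ∀ u : E d, φ (t • u) = t * φ u

theorem exact_local_model {d : ℕ} (f : E d → ℝ)
    (hf : Continuous f) (hPA : IsPiecewiseAffine f) (w : E d) :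
    ∃ (r : ℝ), 0 < r ∧ ∃ (φ : E d → ℝ),
      Continuous φ ∧ IsPiecewiseAffine φ ∧ PositivelyHomogeneous φ ∧
      ∀ u : E d, ‖u‖ ≤ r → f (w + u) = f w + φ u := by
  classical
  obtain ⟨n, C, hcov, hpoly, haff⟩ := hPA
  choose m a b hC using hpoly
  choose g c hg using haff
  have hmem : ∀ i x, x ∈ C i ↔ ∀ j, ⟪a i j, x⟫ ≤ b i j := fun i x => by
    rw [hC i]; exact Iff.rfl
  have hiInter : ∀ i, C i = ⋂ j, {x : E d | ⟪a i j, x⟫ ≤ b i j} := by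
    intro i; rw [hC i]; ext x; simp [Set.mem_iInter]
  have hCclosed : ∀ i, IsClosed (C i) := by
    intro i
    rw [hiInter i]
    exact isClosed_iInter fun j =>
      isClosed_le (Continuous.inner continuous_const continuous_id) continuous_const
  have hCconvex : ∀ i, Convex ℝ (C i) := by
    intro i
    rw [hiInter i]
    exact convex_iInter fun j => convex_halfSpace_le
      ⟨fun x y => inner_add_right _ _ _, fun t x => real_inner_smul_right _ _ _⟩ _
  -- the union of cells not containing w is closed and misses w
  set K : Set (E d) := ⋃ i, (if w ∈ C i then (∅ : Set (E d)) else C i) with hK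
  have hKclosed : IsClosed K := by
    apply isClosed_iUnion_of_finite
    intro i
    split
    · exact isClosed_empty
    · exact hCclosed i
  have hwK : w ∉ K := by
    intro hw
    rw [hK, Set.mem_iUnion] at hw
    obtain ⟨i, hi⟩ := hw
    by_cases h : w ∈ C i
    · rw [if_pos h] at hi; exact hi
    · rw [if_neg h] at hi; exact h hi
  obtain ⟨ε, hε, hball⟩ := Metric.isOpen_iff.1 hKclosed.isOpen_compl w hwK
  set r : ℝ := min (ε / 2) 1 with hr
  have hrpos : 0 < r := lt_min (half_pos hε) one_pos
  have hr1 : r ≤ 1 := min_le_right _ _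
  have hrε : r < ε := lt_of_le_of_lt (min_le_left _ _) (half_lt_self hε)
  -- ball property: points near w lie in a cell containing w
  have hballprop : ∀ u : E d, ‖u‖ ≤ r → ∃ i, w ∈ C i ∧ w + u ∈ C i := by
    intro u hu
    have : w + u ∈ ⋃ i, C i := by rw [hcov]; trivial
    obtain ⟨i, hi⟩ := Set.mem_iUnion.1 this
    refine ⟨i, ?_, hi⟩
    by_contra hwc
    have : w + u ∈ K := Set.mem_iUnion.2 ⟨i, by rw [if_neg hwc]; exact hi⟩
    have hmemball : w + u ∈ Metric.ball w ε := by
      rw [Metric.mem_ball, dist_eq_norm]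
      simpa using lt_of_le_of_lt hu hrε
    exact hball hmemball this
  -- value of f at w on any cell containing w
  have hfw : ∀ i, w ∈ C i → f w = ⟪g i, w⟫ + c i := fun i hi => hg i w hi
  -- segment lemma
  have hseg : ∀ u : E d, ‖u‖ ≤ r → ∀ t : ℝ, 0 ≤ t → t ≤ 1 →
      f (w + t • u) = f w + t * (f (w + u) - f w) := by
    intro u hu t ht0 ht1
    obtain ⟨i, hwi, hui⟩ := hballprop u hu
    have hconv : w + t • u ∈ C i := by
      have := hCconvex i hwi hui (a := 1 - t) (b := t) (by linarith) ht0 (by ring)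
      have heq : w + t • u = (1 - t) • w + t • (w + u) := by module
      rw [heq]; exact this
    rw [hg i _ hconv, hg i _ hui, hfw i hwi]
    rw [inner_add_right, inner_add_right, real_inner_smul_right]
    ring
  -- ray lemma
  have hray : ∀ (u : E d) (α β : ℝ), 0 ≤ α → 0 ≤ β → ‖α • u‖ ≤ r → ‖β • u‖ ≤ r →
      β * (f (w + α • u) - f w) = α * (f (w + β • u) - f w) := by
    have main : ∀ (u : E d) (α β : ℝ), 0 ≤ α → 0 ≤ β → α ≤ β → ‖β • u‖ ≤ r →
        β * (f (w + α • u) - f w) = α * (f (w + β • u) - f w) := by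
      intro u α β hα hβ hαβ hβr
      rcases eq_or_lt_of_le hβ with hβ0 | hβ0
      · have hα0 : α = 0 := le_antisymm (hαβ.trans hβ0.symm.le) hα
        rw [← hβ0, hα0]
      · have hseg' := hseg (β • u) hβr (α / β) (div_nonneg hα hβ)
          ((div_le_one hβ0).2 hαβ)
        rw [smul_smul, div_mul_cancel₀ _ hβ0.ne'] at hseg'
        rw [hseg']
        field_simp
        ring
    intro u α β hα hβ hαr hβr
    rcases le_total α β with h | h
    · exact main u α β hα hβ h hβr
    · exact (main u β α hβ hα h hαr).symm
  -- the scaling factor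
  set τ : E d → ℝ := fun u => r / (1 + ‖u‖) with hτ
  have hτpos : ∀ u, 0 < τ u := fun u =>
    div_pos hrpos (by positivity)
  have hτnorm : ∀ u : E d, ‖τ u • u‖ ≤ r := by
    intro u
    rw [norm_smul, Real.norm_eq_abs, abs_of_pos (hτpos u), hτ]
    rw [div_mul_eq_mul_div, div_le_iff₀ (by positivity)]
    have : ‖u‖ ≤ 1 + ‖u‖ := by linarith [norm_nonneg u]
    nlinarith [norm_nonneg u, hrpos.le]
  set φ : E d → ℝ := fun u => (f (w + τ u • u) - f w) / τ u with hφ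
  -- main local identity
  have hmain : ∀ u : E d, ‖u‖ ≤ r → φ u = f (w + u) - f w := by
    intro u hu
    have hτ1 : τ u ≤ 1 := by
      rw [hτ]
      rw [div_le_one (by positivity)]
      linarith [norm_nonneg u]
    have := hseg u hu (τ u) (hτpos u).le hτ1
    rw [hφ]
    simp only
    rw [this]
    field_simp
    rw [add_sub_cancel_left, mul_div_cancel_left₀ _ (hτpos u).ne']
  -- positive homogeneity
  have hhom : PositivelyHomogeneous φ := by
    intro s hs u
    have h1 : (τ (s • u) • (s • u)) = (s * τ (s • u)) • u := by
      rw [smul_smul, mul_comm]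
    have h2 := hray u (s * τ (s • u)) (τ u) (by positivity) (hτpos u).le
      (by rw [← h1]; exact hτnorm (s • u)) (hτnorm u)
    rw [hφ]
    simp only
    rw [h1, ]
    have hτu := (hτpos u).ne'
    have hτsu := (hτpos (s • u)).ne'
    have : f (w + (s * τ (s • u)) • u) - f w
        = (s * τ (s • u)) * (f (w + τ u • u) - f w) / τ u := by
      field_simp
      linarith [h2]
    rw [this]
    field_simp
  -- continuity
  have hφcont : Continuous φ := by
    have h1 : Continuous fun u : E d => 1 + ‖u‖ := continuous_const.add continuous_norm
    have hne : ∀ u : E d, 1 + ‖u‖ ≠ 0 := fun u => by positivity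
    have hτcont : Continuous τ := continuous_const.div h1 hne
    have hτne : ∀ u, τ u ≠ 0 := fun u => (hτpos u).ne'
    exact ((hf.comp (continuous_const.add (hτcont.smul continuous_id))).sub
      continuous_const).div hτcont hτne
  -- piecewise affineness of φ
  have hφPA : IsPiecewiseAffine φ := by
    refine ⟨n, fun i => {u : E d | ∀ j : Fin (m i + 1),
      ⟪(if h : (j : ℕ) < m i then
          (if w ∈ C i ∧ ⟪a i (Fin.castLT j h), w⟫ = b i (Fin.castLT j h)
            then a i (Fin.castLT j h) else 0) else 0), u⟫ ≤
        (if (j : ℕ) < m i then 0 else (if w ∈ C i then 0 else -1))}, ?_, ?_, ?_⟩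
    · -- cover
      ext u
      simp only [Set.mem_univ, iff_true, Set.mem_iUnion]
      obtain ⟨i, hwi, hui⟩ := hballprop (τ u • u) (hτnorm u)
      refine ⟨i, ?_⟩
      intro j
      by_cases h : (j : ℕ) < m i
      · rw [dif_pos h, if_pos h]
        by_cases htight : w ∈ C i ∧ ⟪a i (Fin.castLT j h), w⟫ = b i (Fin.castLT j h)
        · rw [if_pos htight]
          have := (hmem i _).1 hui (Fin.castLT j h)
          rw [inner_add_right, real_inner_smul_right, htight.2] at this
          have h2 : τ u * ⟪a i (Fin.castLT j h), u⟫ ≤ 0 := by linarith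
          exact le_of_not_gt fun hc => absurd h2 (not_le.2 (mul_pos (hτpos u) hc))
        · rw [if_neg htight, inner_zero_left]
      · rw [dif_neg h, if_neg h, if_pos hwi, inner_zero_left]
    · -- polyhedral
      intro i
      exact ⟨m i + 1, _, _, rfl⟩
    · -- affine on each cell
      intro i
      by_cases hwi : w ∈ C i
      · refine ⟨g i, 0, ?_⟩
        intro u hu
        simp only [Set.mem_setOf_eq] at hu
        -- tight constraints on u
        have htight : ∀ j : Fin (m i), ⟪a i j, w⟫ = b i j → ⟪a i j, u⟫ ≤ 0 := by
          intro j hj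
          have := hu (Fin.castSucc j)
          have hlt : ((Fin.castSucc j : Fin (m i + 1)) : ℕ) < m i := j.isLt
          rw [dif_pos hlt, if_pos hlt] at this
          have hcast : Fin.castLT (Fin.castSucc j) hlt = j := rfl
          rw [hcast, if_pos ⟨hwi, hj⟩] at this
          exact this
        -- find small t with w + t • u ∈ C i
        have hev : ∀ᶠ t in 𝓝[>] (0:ℝ),
            0 < t ∧ t * ‖u‖ ≤ r ∧ ∀ j, ⟪a i j, w + t • u⟫ ≤ b i j := by
          refine (eventually_and.2 ⟨self_mem_nhdsWithin, eventually_and.2 ⟨?_, ?_⟩⟩)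
          · have htend : Tendsto (fun t : ℝ => t * ‖u‖) (𝓝[>] 0) (𝓝 (0 * ‖u‖)) :=
              ((continuous_id.mul continuous_const).tendsto 0).mono_left
                nhdsWithin_le_nhds
            rw [zero_mul] at htend
            exact htend.eventually_le_const hrpos
          · rw [eventually_all]
            intro j
            by_cases hj : ⟪a i j, w⟫ = b i j
            · filter_upwards [self_mem_nhdsWithin] with t ht
              rw [inner_add_right, real_inner_smul_right, hj]
              have := htight j hj
              nlinarith [le_of_lt (Set.mem_Ioi.1 ht)]
            · have hlt : ⟪a i j, w⟫ < b i j :=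
                lt_of_le_of_ne ((hmem i w).1 hwi j) hj
              have htend : Tendsto (fun t : ℝ => ⟪a i j, w + t • u⟫) (𝓝[>] 0)
                  (𝓝 ⟪a i j, w + (0:ℝ) • u⟫) := by
                apply Continuous.tendsto' _ _ _ rfl |>.mono_left nhdsWithin_le_nhds
                exact Continuous.inner continuous_const
                  (continuous_const.add (continuous_id.smul continuous_const))
              rw [zero_smul, add_zero] at htend
              exact htend.eventually_le_const hlt
        obtain ⟨t, ht0, htr, htin⟩ := hev.exists
        have htCi : w + t • u ∈ C i := (hmem i _).2 htin
        have hft : f (w + t • u) = f w + t * ⟪g i, u⟫ := by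
          rw [hg i _ htCi, hfw i hwi, inner_add_right, real_inner_smul_right]; ring
        -- use homogeneity: φ u = (1/t) * φ (t • u)
        have hnorm : ‖t • u‖ ≤ r := by
          rw [norm_smul, Real.norm_eq_abs, abs_of_pos ht0]; exact htr
        have h1 : φ (t • u) = t * ⟪g i, u⟫ := by
          rw [hmain _ hnorm, hft]; ring
        have h2 : φ u = (1 / t) * φ (t • u) := by
          have := hhom (1 / t) (by positivity) (t • u)
          rw [smul_smul, one_div_mul_cancel ht0.ne', one_smul] at this
          rw [this]
        rw [h2, h1]
        field_simp
        ring
      · -- empty cell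
        refine ⟨0, 0, ?_⟩
        intro u hu
        exfalso
        simp only [Set.mem_setOf_eq] at hu
        have := hu (Fin.last (m i))
        have hnlt : ¬ ((Fin.last (m i) : ℕ) < m i) := by simp
        rw [dif_neg hnlt, if_neg hnlt, if_neg hwi, inner_zero_left] at this
        linarith
  exact ⟨r, hrpos, φ, hφcont, hφPA, hhom, fun u hu => by rw [hmain u hu]; ring⟩
end
end

section
/- Let f : ℝ^d → ℝ be continuous and piecewise-affine. Then 0 belongs to the Fréchet subdifferential of f at w if and only if w is a local minimizer of f. -/
open scoped RealInnerProductSpace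
open Filter Topology

noncomputable section

/-- The Fréchet subdifferential: `g` is a Fréchet subgradient of `f` at `x` iff
`liminf_{y→x, y≠x} (f y − f x − ⟪g, y−x⟫)/‖y−x‖ ≥ 0`, expressed in the equivalent
`ε`-form. -/
def frechetSubdiff {d : ℕ} (f : E d → ℝ) (x : E d) : Set (E d) :=
  {g | ∀ ε : ℝ, 0 < ε →
    ∀ᶠ y in nhdsWithin x {x}ᶜ, -ε * ‖y - x‖ ≤ f y - f x - ⟪g, y - x⟫}

theorem frechet_stationary_iff_localMin {d : ℕ} (f : E d → ℝ)
    (hf : Continuous f) (hPA : IsPiecewiseAffine f) (w : E d) :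
    (0 : E d) ∈ frechetSubdiff f w ↔ IsLocalMin f w := by
  classical
  constructor
  · intro h
    obtain ⟨n, C, hcov, hpoly, haff⟩ := hPA
    -- cells are closed
    have hclosed : ∀ i, IsClosed (C i) := by
      intro i
      obtain ⟨m, a, b, hC⟩ := hpoly i
      rw [hC]
      have : {x : E d | ∀ j, ⟪a j, x⟫ ≤ b j} = ⋂ j, {x : E d | ⟪a j, x⟫ ≤ b j} := by
        ext x; simp
      rw [this]
      exact isClosed_iInter fun j =>
        isClosed_le (continuous_const.inner continuous_id) continuous_const
    -- cells are star-shaped (convex): segment membership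
    have hseg : ∀ i x, w ∈ C i → x ∈ C i → ∀ t : ℝ, 0 ≤ t → t ≤ 1 →
        w + t • (x - w) ∈ C i := by
      intro i x hw hx t ht0 ht1
      obtain ⟨m, a, b, hC⟩ := hpoly i
      rw [hC] at hw hx ⊢
      intro j
      have h1 := hw j
      have h2 := hx j
      have key : ⟪a j, w + t • (x - w)⟫ = ⟪a j, w⟫ + t * (⟪a j, x⟫ - ⟪a j, w⟫) := by
        rw [inner_add_right, inner_smul_right, inner_sub_right]
      rw [key]; nlinarith
    -- neighborhood avoiding cells not containing w
    set V : Fin n → Set (E d) := fun i => if w ∈ C i then Set.univ else (C i)ᶜ with hV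
    have hVnhds : ∀ i, V i ∈ 𝓝 w := by
      intro i
      by_cases hw : w ∈ C i
      · simp [hV, hw]
      · simpa [hV, hw] using (hclosed i).isOpen_compl.mem_nhds hw
    have hInhds : (⋂ i, V i) ∈ 𝓝 w := Filter.iInter_mem.2 hVnhds
    filter_upwards [hInhds] with x hx
    by_contra hlt
    push_neg at hlt
    -- x is in some cell containing w
    have hxU : x ∈ ⋃ i, C i := by rw [hcov]; trivial
    obtain ⟨_, ⟨i, rfl⟩, hxi⟩ := hxU
    have hwi : w ∈ C i := by
      by_contra hwi
      have := Set.mem_iInter.1 hx i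
      simp [hV, hwi] at this
      exact this hxi
    obtain ⟨g, c, hg⟩ := haff i
    have hfx := hg x hxi
    have hfw := hg w hwi
    have hs : f x - f w = ⟪g, x - w⟫ := by rw [hfx, hfw, inner_sub_right]; ring
    set s : ℝ := ⟪g, x - w⟫ with hsdef
    have hsneg : s < 0 := by rw [← hs]; linarith
    have hxw : x ≠ w := by
      intro hxe; rw [hxe] at hlt; exact absurd hlt (lt_irrefl _)
    have hnorm : (0:ℝ) < ‖x - w‖ := by
      rw [norm_pos_iff]; exact sub_ne_zero.2 hxw
    set δ : ℝ := -s / ‖x - w‖ with hδ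
    have hδpos : 0 < δ := div_pos (neg_pos.2 hsneg) hnorm
    have hev := h (δ/2) (half_pos hδpos)
    -- curve t ↦ w + t • (x - w)
    have htend : Tendsto (fun t : ℝ => w + t • (x - w)) (𝓝[>] (0:ℝ))
        (nhdsWithin w {w}ᶜ) := by
      apply tendsto_nhdsWithin_of_tendsto_nhds_of_eventually_within
      · have : Tendsto (fun t : ℝ => w + t • (x - w)) (𝓝 (0:ℝ)) (𝓝 (w + (0:ℝ) • (x - w))) := by
          exact (continuous_const.add ((continuous_id.smul continuous_const))).tendsto 0
        simpa using this.mono_left nhdsWithin_le_nhds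
      · filter_upwards [self_mem_nhdsWithin] with t (ht : 0 < t)
        simp only [Set.mem_compl_iff, Set.mem_singleton_iff]
        intro hc
        have : t • (x - w) = 0 := by
          have := congrArg (fun z => z - w) hc
          simpa [add_sub_cancel_left] using this
        rcases smul_eq_zero.1 this with h1 | h2
        · exact absurd h1 (ne_of_gt ht)
        · exact hxw (sub_eq_zero.1 h2)
    have hev2 := htend.eventually hev
    have hle1 : ∀ᶠ t : ℝ in 𝓝[>] 0, t ≤ 1 :=
      eventually_nhdsWithin_of_eventually_nhds (Filter.Tendsto.eventually_le_const
        (by norm_num) tendsto_id)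
    have hpos : ∀ᶠ t : ℝ in 𝓝[>] 0, 0 < t := self_mem_nhdsWithin
    obtain ⟨t, ht1, htle, htpos⟩ := (hev2.and (hle1.and hpos)).exists
    -- evaluate at y = w + t • (x - w)
    have hyC : w + t • (x - w) ∈ C i := hseg i x hwi hxi t (le_of_lt htpos) htle
    have hfy : f (w + t • (x - w)) - f w = t * s := by
      rw [hg _ hyC, hfw, hsdef, inner_sub_right, inner_add_right, inner_smul_right,
        inner_sub_right]
      ring
    have hny : ‖w + t • (x - w) - w‖ = t * ‖x - w‖ := by
      rw [add_sub_cancel_left, norm_smul, Real.norm_eq_abs, abs_of_pos htpos]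
    rw [hny, hfy] at ht1
    have hz : ⟪(0 : E d), w + t • (x - w) - w⟫ = 0 := inner_zero_left _
    rw [hz] at ht1
    have hds : δ * ‖x - w‖ = -s := by rw [hδ, div_mul_cancel₀ _ hnorm.ne']
    nlinarith [ht1, mul_pos htpos hnorm]
  · intro h ε hε
    have h' : ∀ᶠ y in nhdsWithin w {w}ᶜ, f w ≤ f y := h.filter_mono nhdsWithin_le_nhds
    filter_upwards [h'] with y hy
    have : ⟪(0 : E d), y - w⟫ = 0 := inner_zero_left _
    rw [this]
    nlinarith [norm_nonneg (y - w), mul_nonneg (le_of_lt hε) (norm_nonneg (y - w))]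
end
end

section
/- Let h, g : ℝ^d → ℝ be convex piecewise-affine functions, let f = h − g, fix w ∈ ℝ^d, and set X = ∂h(w), Y = ∂g(w) (the convex subdifferentials). Then the Fréchet subdifferential of f at w equals {s ∈ ℝ^d : s + Y ⊆ X}. -/
open scoped RealInnerProductSpace
open Filter

noncomputable section

/-- The convex subdifferential of a function at a point. -/
def convexSubdiff {d : ℕ} (f : E d → ℝ) (x : E d) : Set (E d) :=
  {s | ∀ y : E d, f x + ⟪s, y - x⟫ ≤ f y}

lemma affine_le_of_eqOn {d : ℕ} {h : E d → ℝ} (hconv : ConvexOn ℝ Set.univ h)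
    {a : E d} {b : ℝ} {C : Set (E d)} {z : E d} (hz : z ∈ interior C)
    (heq : ∀ x ∈ C, h x = ⟪a, x⟫ + b) (x : E d) : ⟪a, x⟫ + b ≤ h x := by
  have hcont : ContinuousAt (fun t : ℝ => z + t • (x - z)) 0 := by fun_prop
  have hmem : ∀ᶠ t : ℝ in nhds 0, z + t • (x - z) ∈ interior C := by
    apply hcont.eventually_mem
    simpa using isOpen_interior.mem_nhds hz
  rw [Metric.eventually_nhds_iff] at hmem
  obtain ⟨ε, hε, hball⟩ := hmem
  set t : ℝ := min (ε / 2) 1 with ht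
  have ht0 : 0 < t := by positivity
  have ht1 : t ≤ 1 := min_le_right _ _
  have htε : |t - 0| < ε := by
    rw [sub_zero, abs_of_pos ht0]
    exact lt_of_le_of_lt (min_le_left _ _) (by linarith)
  have hmemC : z + t • (x - z) ∈ C := interior_subset (hball (by simpa [Real.dist_eq] using htε))
  have hcvx := hconv.2 (Set.mem_univ z) (Set.mem_univ x) (by linarith : (0:ℝ) ≤ 1 - t)
    ht0.le (by ring)
  have hseg : (1 - t) • z + t • x = z + t • (x - z) := by module
  rw [hseg] at hcvx
  have h1 : h (z + t • (x - z)) = ⟪a, z⟫ + b + t * ⟪a, x - z⟫ := by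
    rw [heq _ hmemC, inner_add_right, inner_smul_right]; ring
  have h2 : h z = ⟪a, z⟫ + b := heq _ (interior_subset hz)
  have h3 : ⟪a, x - z⟫ = ⟪a, x⟫ - ⟪a, z⟫ := inner_sub_right a x z
  rw [smul_eq_mul, smul_eq_mul] at hcvx
  have key : t * (⟪a, x⟫ + b) ≤ t * h x := by nlinarith [hcvx, h1, h2, h3]
  exact le_of_mul_le_mul_left key ht0

lemma max_rep {d : ℕ} {h : E d → ℝ} (hconv : ConvexOn ℝ Set.univ h)
    (hPA : IsPiecewiseAffine h) :
    ∃ (n : ℕ) (a : Fin n → E d) (c : Fin n → ℝ) (S : Finset (Fin n)),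
      S.Nonempty ∧
      (∀ i ∈ S, ∀ x, ⟪a i, x⟫ + c i ≤ h x) ∧
      (∀ x, ∃ i ∈ S, h x = ⟪a i, x⟫ + c i) := by
  classical
  obtain ⟨n, C, hcover, hpoly, haff⟩ := hPA
  choose a c haff using haff
  have hclosed : ∀ i, IsClosed (C i) := by
    intro i
    obtain ⟨m, p, q, hC⟩ := hpoly i
    rw [hC]
    have : {x : E d | ∀ j, ⟪p j, x⟫ ≤ q j} = ⋂ j, {x : E d | ⟪p j, x⟫ ≤ q j} := by
      ext x; simp
    rw [this]
    exact isClosed_iInter fun j =>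
      isClosed_le (Continuous.inner continuous_const continuous_id) continuous_const
  set S : Finset (Fin n) := Finset.univ.filter (fun i => (interior (C i)).Nonempty) with hSdef
  have hdense : Dense (⋃ i, interior (C i)) := dense_iUnion_interior_of_closed hclosed hcover
  have hmemS : ∀ {x : E d} {i}, x ∈ interior (C i) → i ∈ S := by
    intro x i hx
    simp only [hSdef, Finset.mem_filter, Finset.mem_univ, true_and]
    exact ⟨x, hx⟩
  have hS : S.Nonempty := by
    obtain ⟨x, hx⟩ := hdense.nonempty
    obtain ⟨t, ⟨i, rfl⟩, hxt⟩ := hx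
    exact ⟨i, hmemS hxt⟩
  have hminor : ∀ i ∈ S, ∀ x, ⟪a i, x⟫ + c i ≤ h x := by
    intro i hi x
    simp only [hSdef, Finset.mem_filter] at hi
    obtain ⟨z, hz⟩ := hi.2
    exact affine_le_of_eqOn hconv hz (haff i) x
  refine ⟨n, a, c, S, hS, hminor, ?_⟩
  have hcont : Continuous h := by
    rw [← continuousOn_univ]
    simpa using hconv.continuousOn isOpen_univ
  set m : E d → ℝ := fun x => S.sup' hS (fun i => ⟪a i, x⟫ + c i) with hmdef
  have hmcont : Continuous m := by
    rw [continuous_iff_continuousAt]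
    intro x
    exact ContinuousAt.finset_sup'_apply hS fun i _ =>
      ((Continuous.inner continuous_const continuous_id).add continuous_const).continuousAt
  have heq : h = m := by
    refine Continuous.ext_on hdense hcont hmcont ?_
    intro x hx
    obtain ⟨t, ⟨i, rfl⟩, hxt⟩ := hx
    have hiS : i ∈ S := hmemS hxt
    have h1 : h x = ⟪a i, x⟫ + c i := haff i x (interior_subset hxt)
    have h2 : m x ≤ h x := Finset.sup'_le _ _ fun j hj => hminor j hj x
    have h3 : ⟪a i, x⟫ + c i ≤ m x := Finset.le_sup' (fun i => ⟪a i, x⟫ + c i) hiS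
    linarith
  intro x
  obtain ⟨i, hi, hix⟩ := Finset.exists_mem_eq_sup' hS (fun i => ⟪a i, x⟫ + c i)
  exact ⟨i, hi, by rw [heq]; exact hix⟩

lemma key_lemma {d : ℕ} {h : E d → ℝ} (hconv : ConvexOn ℝ Set.univ h)
    (hPA : IsPiecewiseAffine h) (w : E d) :
    ∃ φ : E d → ℝ,
      φ 0 = 0 ∧
      (∀ (t : ℝ) (u : E d), 0 < t → φ (t • u) = t * φ u) ∧
      (∃ δ : ℝ, 0 < δ ∧ ∀ u : E d, ‖u‖ < δ → h (w + u) - h w = φ u) ∧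
      (∀ u, φ u ≤ h (w + u) - h w) ∧
      (convexSubdiff h w = {s | ∀ u, ⟪s, u⟫ ≤ φ u}) ∧
      (∀ u, ∃ t ∈ convexSubdiff h w, ⟪t, u⟫ = φ u) := by
  classical
  obtain ⟨n, a, c, S, hS, hminor, hattain⟩ := max_rep hconv hPA
  set A : Finset (Fin n) := S.filter (fun i => ⟪a i, w⟫ + c i = h w) with hAdef
  have hA : A.Nonempty := by
    obtain ⟨i, hi, hieq⟩ := hattain w
    exact ⟨i, Finset.mem_filter.mpr ⟨hi, hieq.symm⟩⟩
  have hAS : ∀ i ∈ A, i ∈ S := fun i hi => (Finset.mem_filter.mp hi).1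
  have hAact : ∀ i ∈ A, ⟪a i, w⟫ + c i = h w := fun i hi => (Finset.mem_filter.mp hi).2
  set φ : E d → ℝ := fun u => A.sup' hA (fun i => ⟪a i, u⟫) with hφdef
  -- lower bound
  have hlow : ∀ u, φ u ≤ h (w + u) - h w := by
    intro u
    refine Finset.sup'_le _ _ fun i hi => ?_
    have h1 : ⟪a i, w + u⟫ + c i ≤ h (w + u) := hminor i (hAS i hi) (w + u)
    have h2 : ⟪a i, w + u⟫ = ⟪a i, w⟫ + ⟪a i, u⟫ := inner_add_right _ _ _
    have h3 := hAact i hi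
    linarith
  -- φ 0 = 0
  have hφ0 : φ 0 = 0 := by
    have : (fun i => ⟪a i, (0 : E d)⟫) = fun _ : Fin n => (0:ℝ) :=
      funext fun i => inner_zero_right _
    simp only [hφdef, this, Finset.sup'_const]
  -- positive homogeneity
  have hhomog : ∀ (t : ℝ) (u : E d), 0 < t → φ (t • u) = t * φ u := by
    intro t u ht
    refine le_antisymm (Finset.sup'_le _ _ fun i hi => ?_) ?_
    · rw [real_inner_smul_right]
      exact mul_le_mul_of_nonneg_left (Finset.le_sup' (fun i => ⟪a i, u⟫) hi) ht.le
    · obtain ⟨i, hi, hie⟩ := Finset.exists_mem_eq_sup' hA (fun i => ⟪a i, u⟫)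
      have h1 : t * φ u = ⟪a i, t • u⟫ := by
        rw [real_inner_smul_right, ← hie]
      have h2 : ⟪a i, t • u⟫ ≤ φ (t • u) := Finset.le_sup' (fun i => ⟪a i, t • u⟫) hi
      linarith
  -- local exactness
  have hK : ∃ K : ℝ, 0 < K ∧ ∀ i ∈ S, ‖a i‖ ≤ K := by
    refine ⟨1 + S.sup' hS (fun i => ‖a i‖), ?_, ?_⟩
    · have : (0:ℝ) ≤ S.sup' hS (fun i => ‖a i‖) := by
        obtain ⟨i, hi⟩ := hS
        exact le_trans (norm_nonneg (a i)) (Finset.le_sup' (fun i => ‖a i‖) hi)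
      linarith
    · intro i hi
      have := Finset.le_sup' (fun i => ‖a i‖) hi
      linarith
  obtain ⟨K, hK0, hKb⟩ := hK
  set B : Finset (Fin n) := S \ A with hBdef
  set ρ : ℝ := if hB : B.Nonempty then h w - B.sup' hB (fun i => ⟪a i, w⟫ + c i) else 1
    with hρdef
  have hρ0 : 0 < ρ := by
    rw [hρdef]
    split_ifs with hB
    · obtain ⟨i, hi, hie⟩ := Finset.exists_mem_eq_sup' hB (fun i => ⟪a i, w⟫ + c i)
      rw [hie]
      have hiS : i ∈ S := (Finset.mem_sdiff.mp hi).1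
      have hiA : i ∉ A := (Finset.mem_sdiff.mp hi).2
      have h1 : ⟪a i, w⟫ + c i ≤ h w := by
        have := hminor i hiS w; linarith
      have h2 : ⟪a i, w⟫ + c i ≠ h w := by
        intro heq; exact hiA (Finset.mem_filter.mpr ⟨hiS, heq⟩)
      have := lt_of_le_of_ne h1 h2
      linarith
    · norm_num
  have hρB : ∀ i ∈ B, ⟪a i, w⟫ + c i ≤ h w - ρ := by
    intro i hi
    have hB : B.Nonempty := ⟨i, hi⟩
    rw [hρdef]; rw [dif_pos hB]
    have := Finset.le_sup' (fun i => ⟪a i, w⟫ + c i) hi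
    linarith
  have hexact : ∀ u : E d, ‖u‖ < ρ / (2 * K) → h (w + u) - h w = φ u := by
    intro u hu
    refine le_antisymm ?_ (by linarith [hlow u])
    obtain ⟨j, hjS, hj⟩ := hattain (w + u)
    by_cases hjA : j ∈ A
    · have h1 : h (w + u) = h w + ⟪a j, u⟫ := by
        rw [hj, inner_add_right]
        have := hAact j hjA
        linarith
      have h2 : ⟪a j, u⟫ ≤ φ u := Finset.le_sup' (fun i => ⟪a i, u⟫) hjA
      linarith
    · exfalso
      have hjB : j ∈ B := Finset.mem_sdiff.mpr ⟨hjS, hjA⟩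
      have hb1 : ⟪a j, u⟫ ≤ K * ‖u‖ := by
        calc ⟪a j, u⟫ ≤ ‖a j‖ * ‖u‖ := real_inner_le_norm _ _
          _ ≤ K * ‖u‖ := mul_le_mul_of_nonneg_right (hKb j hjS) (norm_nonneg _)
      obtain ⟨i0, hi0⟩ := hA
      have hb2 : -(K * ‖u‖) ≤ ⟪a i0, u⟫ := by
        have h1 : |⟪a i0, u⟫| ≤ ‖a i0‖ * ‖u‖ := abs_real_inner_le_norm _ _
        have h2 : ‖a i0‖ * ‖u‖ ≤ K * ‖u‖ :=
          mul_le_mul_of_nonneg_right (hKb i0 (hAS i0 hi0)) (norm_nonneg _)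
        have := neg_abs_le ⟪a i0, u⟫
        linarith
    -- h(w+u) ≤ h w - ρ + K‖u‖ and h(w+u) ≥ h w - K‖u‖, K‖u‖ < ρ/2
      have hKu : K * ‖u‖ < ρ / 2 := by
        have := mul_lt_mul_of_pos_left hu hK0
        calc K * ‖u‖ < K * (ρ / (2 * K)) := this
          _ = ρ / 2 := by field_simp
      have hup : h (w + u) ≤ h w - ρ + K * ‖u‖ := by
        rw [hj, inner_add_right]
        have := hρB j hjB
        linarith
      have hdown : h w - K * ‖u‖ ≤ h (w + u) := by
        have h1 : ⟪a i0, w + u⟫ + c i0 ≤ h (w + u) := hminor i0 (hAS i0 hi0) (w + u)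
        rw [inner_add_right] at h1
        have := hAact i0 hi0
        linarith
      linarith
  refine ⟨φ, hφ0, hhomog, ⟨ρ / (2 * K), by positivity, hexact⟩, hlow, ?_, ?_⟩
  · -- subdifferential characterization
    ext s
    simp only [convexSubdiff, Set.mem_setOf_eq]
    constructor
    · intro hs u
      set t : ℝ := (ρ / (2 * K)) / (2 * (‖u‖ + 1)) with htdef
      have ht0 : 0 < t := by positivity
      have htu : t * ‖u‖ < ρ / (2 * K) := by
        rw [htdef]
        rw [div_mul_eq_mul_div, div_lt_iff₀ (by positivity : (0:ℝ) < 2 * (‖u‖ + 1))]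
        have hδ : 0 < ρ / (2 * K) := by positivity
        nlinarith [norm_nonneg u]
      have h1 := hs (w + t • u)
      rw [add_sub_cancel_left] at h1
      have h2 : h (w + t • u) - h w = φ (t • u) := by
        apply hexact
        rw [norm_smul, Real.norm_eq_abs, abs_of_pos ht0]
        exact htu
      have h3 : φ (t • u) = t * φ u := hhomog t u ht0
      have h4 : ⟪s, t • u⟫ = t * ⟪s, u⟫ := real_inner_smul_right _ _ _
      have h5 : t * ⟪s, u⟫ ≤ t * φ u := by linarith
      exact le_of_mul_le_mul_left h5 ht0
    · intro hs y
      have h1 : ⟪s, y - w⟫ ≤ φ (y - w) := hs (y - w)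
      have h2 := hlow (y - w)
      rw [add_sub_cancel] at h2
      linarith
  · -- attainment
    intro u
    obtain ⟨i, hi, hie⟩ := Finset.exists_mem_eq_sup' hA (fun i => ⟪a i, u⟫)
    refine ⟨a i, ?_, hie.symm⟩
    intro y
    have h1 : ⟪a i, y⟫ + c i ≤ h y := hminor i (hAS i hi) y
    have h2 : ⟪a i, y - w⟫ = ⟪a i, y⟫ - ⟪a i, w⟫ := inner_sub_right _ _ _
    have h3 := hAact i hi
    linarith

theorem frechet_subdiff_dc_eq_translates {d : ℕ} (h g : E d → ℝ)
    (hconv : ConvexOn ℝ Set.univ h) (gconv : ConvexOn ℝ Set.univ g)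
    (hPA : IsPiecewiseAffine h) (gPA : IsPiecewiseAffine g) (w : E d) :
    frechetSubdiff (fun x => h x - g x) w =
      {s : E d | (fun y => s + y) '' convexSubdiff g w ⊆ convexSubdiff h w} := by
  obtain ⟨φ, hφ0, hφhom, ⟨δh, hδh, hφex⟩, hφlow, hφsub, hφatt⟩ := key_lemma hconv hPA w
  obtain ⟨ψ, hψ0, hψhom, ⟨δg, hδg, hψex⟩, hψlow, hψsub, hψatt⟩ := key_lemma gconv gPA w
  ext s
  have hchar : s ∈ frechetSubdiff (fun x => h x - g x) w ↔ ∀ u, ⟪s, u⟫ + ψ u ≤ φ u := by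
    constructor
    · intro hs u
      by_cases hu : u = 0
      · simp [hu, hψ0, hφ0]
      have hu0 : 0 < ‖u‖ := norm_pos_iff.mpr hu
      have key : ∀ ε : ℝ, 0 < ε → ⟪s, u⟫ + ψ u ≤ φ u + ε * ‖u‖ := by
        intro ε hε
        have hev := hs ε hε
        rw [eventually_nhdsWithin_iff, Metric.eventually_nhds_iff] at hev
        obtain ⟨δ', hδ', hP⟩ := hev
        set t : ℝ := min (min δh δg) δ' / (2 * (‖u‖ + 1)) with htdef
        have hmin0 : 0 < min (min δh δg) δ' := lt_min (lt_min hδh hδg) hδ'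
        have ht0 : 0 < t := by positivity
        have htu : t * ‖u‖ < min (min δh δg) δ' := by
          rw [htdef, div_mul_eq_mul_div, div_lt_iff₀ (by positivity : (0:ℝ) < 2 * (‖u‖ + 1))]
          nlinarith [norm_nonneg u]
        have htuh : t * ‖u‖ < δh := lt_of_lt_of_le htu (le_trans (min_le_left _ _) (min_le_left _ _))
        have htug : t * ‖u‖ < δg := lt_of_lt_of_le htu (le_trans (min_le_left _ _) (min_le_right _ _))
        have htuδ : t * ‖u‖ < δ' := lt_of_lt_of_le htu (min_le_right _ _)
        set y : E d := w + t • u with hydef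
        have hyw : y - w = t • u := by rw [hydef]; abel
        have hnorm : ‖y - w‖ = t * ‖u‖ := by
          rw [hyw, norm_smul, Real.norm_eq_abs, abs_of_pos ht0]
        have hyne : y ∈ ({w}ᶜ : Set (E d)) := by
          simp only [Set.mem_compl_iff, Set.mem_singleton_iff]
          intro hyw'
          have : y - w = 0 := by rw [hyw']; simp
          rw [hyw] at this
          exact hu (by simpa [ht0.ne'] using smul_eq_zero.mp this)
        have hdist : dist y w < δ' := by
          rw [dist_eq_norm, hnorm]; exact htuδ
        have hPy := hP hdist hyne
        rw [hyw] at hPy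
        have hf : h y - g y - (h w - g w) = t * (φ u - ψ u) := by
          have h1 : h y - h w = φ (t • u) := by
            rw [hydef]; exact hφex _ (by rw [norm_smul, Real.norm_eq_abs, abs_of_pos ht0]; exact htuh)
          have h2 : g y - g w = ψ (t • u) := by
            rw [hydef]; exact hψex _ (by rw [norm_smul, Real.norm_eq_abs, abs_of_pos ht0]; exact htug)
          rw [hφhom t u ht0] at h1
          rw [hψhom t u ht0] at h2
          linarith
        have hinner : ⟪s, t • u⟫ = t * ⟪s, u⟫ := real_inner_smul_right _ _ _
        have hns : ‖t • u‖ = t * ‖u‖ := by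
          rw [norm_smul, Real.norm_eq_abs, abs_of_pos ht0]
        rw [hinner, hns] at hPy
        have hPy' : -ε * (t * ‖u‖) ≤ (h y - g y) - (h w - g w) - t * ⟪s, u⟫ := hPy
        have hkey : t * (⟪s, u⟫ + ψ u) ≤ t * (φ u + ε * ‖u‖) := by nlinarith [hPy', hf]
        exact le_of_mul_le_mul_left hkey ht0
      by_contra hcon
      push_neg at hcon
      have hnum : 0 < ⟪s, u⟫ + ψ u - φ u := by linarith
      have hε : 0 < (⟪s, u⟫ + ψ u - φ u) / (2 * ‖u‖) := div_pos hnum (by positivity)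
      have hk := key _ hε
      have heq : (⟪s, u⟫ + ψ u - φ u) / (2 * ‖u‖) * ‖u‖ = (⟪s, u⟫ + ψ u - φ u) / 2 := by
        field_simp
      rw [heq] at hk
      linarith
    · intro hineq ε hε
      rw [eventually_nhdsWithin_iff, Metric.eventually_nhds_iff]
      refine ⟨min δh δg, lt_min hδh hδg, ?_⟩
      intro y hy _
      rw [dist_eq_norm] at hy
      have h1 : h y - h w = φ (y - w) := by
        have := hφex (y - w) (lt_of_lt_of_le hy (min_le_left _ _))
        rwa [add_sub_cancel] at this
      have h2 : g y - g w = ψ (y - w) := by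
        have := hψex (y - w) (lt_of_lt_of_le hy (min_le_right _ _))
        rwa [add_sub_cancel] at this
      have h3 := hineq (y - w)
      have h4 : 0 ≤ ε * ‖y - w‖ := mul_nonneg hε.le (norm_nonneg _)
      simp only
      nlinarith
  rw [hchar]
  simp only [Set.mem_setOf_eq]
  constructor
  · intro hineq x hx
    obtain ⟨t, htY, rfl⟩ := hx
    rw [hφsub]
    intro u
    rw [hψsub] at htY
    have h1 := htY u
    have h2 := hineq u
    rw [inner_add_left]
    linarith
  · intro hs u
    obtain ⟨t, htY, hteq⟩ := hψatt u
    have hmem : s + t ∈ convexSubdiff h w := hs ⟨t, htY, rfl⟩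
    rw [hφsub] at hmem
    have := hmem u
    rw [inner_add_left] at this
    linarith
end
end

section
/- Let h, g : ℝ^d → ℝ be convex piecewise-affine functions with X = ∂h(w) and Y = ∂g(w). Then 0 ∈ ∂_F(h−g)(w) if and only if Y ⊆ X. -/
open scoped RealInnerProductSpace
open Filter

noncomputable section

/-- A convex piecewise affine function is a finite maximum of affine functions. -/
lemma pa_sup_rep {d : ℕ} {f : E d → ℝ} (hconv : ConvexOn ℝ Set.univ f)
    (hPA : IsPiecewiseAffine f) :
    ∃ (S : Finset (E d × ℝ)) (hS : S.Nonempty),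
      ∀ x, f x = S.sup' hS fun p => ⟪p.1, x⟫ + p.2 := by
  classical
  obtain ⟨n, C, hcover, hpoly, haff⟩ := hPA
  choose G c hGc using haff
  have hclosed : ∀ i, IsClosed (C i) := by
    intro i
    obtain ⟨m, a, b, hab⟩ := hpoly i
    rw [hab]
    have : {x : E d | ∀ j, ⟪a j, x⟫ ≤ b j} = ⋂ j, {x : E d | ⟪a j, x⟫ ≤ b j} := by
      ext x; simp
    rw [this]
    exact isClosed_iInter fun j =>
      isClosed_le (Continuous.inner continuous_const continuous_id) continuous_const
  -- the affine piece on a set with nonempty interior minorizes f everywhere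
  have hmin : ∀ i, (interior (C i)).Nonempty → ∀ x, ⟪G i, x⟫ + c i ≤ f x := by
    intro i hi x
    obtain ⟨y, hy⟩ := hi
    obtain ⟨r, hr, hball⟩ := Metric.isOpen_iff.1 isOpen_interior y hy
    by_cases hxy : x = y
    · subst hxy
      rw [← hGc i x (interior_subset hy)]
    · have hnorm : 0 < ‖y - x‖ := by
        rw [norm_pos_iff, sub_ne_zero]
        exact fun e => hxy e.symm
      set t : ℝ := r / (2 * ‖y - x‖) with ht_def
      have ht : 0 < t := by positivity
      set z : E d := y + t • (y - x) with hz_def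
      have hz : z ∈ C i := by
        apply interior_subset
        apply hball
        show dist z y < r
        rw [dist_eq_norm]
        have hzy : z - y = t • (y - x) := by rw [hz_def]; abel
        rw [hzy, norm_smul, Real.norm_eq_abs, abs_of_pos ht, ht_def]
        have he : r / (2 * ‖y - x‖) * ‖y - x‖ = r / 2 := by
          field_simp
        rw [he]
        linarith
      have h1t : (0:ℝ) < 1 + t := by linarith
      have hcomb : y = (1 / (1 + t)) • z + (t / (1 + t)) • x := by
        rw [hz_def]
        have h1 : (1:ℝ) + t ≠ 0 := h1t.ne'
        match_scalars <;> field_simp <;> ring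
      have hconv2 := hconv.2 (Set.mem_univ z) (Set.mem_univ x)
        (by positivity : (0:ℝ) ≤ 1 / (1 + t)) (by positivity : (0:ℝ) ≤ t / (1 + t))
        (by field_simp)
      rw [← hcomb] at hconv2
      have hfy := hGc i y (interior_subset hy)
      have hfz := hGc i z hz
      have hzin : ⟪G i, z⟫ = ⟪G i, y⟫ + t * (⟪G i, y⟫ - ⟪G i, x⟫) := by
        rw [hz_def, inner_add_right, real_inner_smul_right, inner_sub_right]
      rw [hfy, hfz, hzin] at hconv2
      simp only [smul_eq_mul] at hconv2
      have he : 1 / (1 + t) * (⟪G i, y⟫ + t * (⟪G i, y⟫ - ⟪G i, x⟫) + c i)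
          + t / (1 + t) * f x - (⟪G i, y⟫ + c i)
          = (t / (1 + t)) * (f x - (⟪G i, x⟫ + c i)) := by
        field_simp
        ring
      have h4 : 0 ≤ (t / (1 + t)) * (f x - (⟪G i, x⟫ + c i)) := by linarith
      have h5 : (t / (1 + t)) * 0 ≤ (t / (1 + t)) * (f x - (⟪G i, x⟫ + c i)) := by
        rw [mul_zero]; exact h4
      have h6 := le_of_mul_le_mul_left h5 (by positivity : (0:ℝ) < t / (1 + t))
      linarith
  -- Baire: interiors of pieces are dense
  have hdense : Dense (⋃ i, interior (C i)) := dense_iUnion_interior_of_closed hclosed hcover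
  set s : Finset (Fin n) := Finset.univ.filter (fun i => (interior (C i)).Nonempty) with hs_def
  have hne : s.Nonempty := by
    obtain ⟨x, hx⟩ := hdense.nonempty
    obtain ⟨_, ⟨i, rfl⟩, hi⟩ := hx
    exact ⟨i, Finset.mem_filter.2 ⟨Finset.mem_univ i, ⟨x, hi⟩⟩⟩
  have hmem_int : ∀ i ∈ s, (interior (C i)).Nonempty := fun i hi => (Finset.mem_filter.1 hi).2
  set M : E d → ℝ := fun x => s.sup' hne fun i => ⟪G i, x⟫ + c i with hM_def
  have hle : ∀ x, M x ≤ f x := by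
    intro x
    exact Finset.sup'_le _ _ fun i hi => hmin i (hmem_int i hi) x
  have hfc : Continuous f := continuousOn_univ.1 (hconv.continuousOn isOpen_univ)
  have hMc : Continuous M := by
    apply Continuous.finset_sup'_apply hne
    intro i _
    exact (Continuous.inner continuous_const continuous_id).add continuous_const
  have hEq : f = M := by
    apply Continuous.ext_on hdense hfc hMc
    intro x hx
    obtain ⟨_, ⟨i, rfl⟩, hi⟩ := hx
    have his : i ∈ s := Finset.mem_filter.2 ⟨Finset.mem_univ i, ⟨x, hi⟩⟩
    refine le_antisymm ?_ (hle x)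
    rw [hGc i x (interior_subset hi)]
    exact Finset.le_sup' (fun j => ⟪G j, x⟫ + c j) his
  refine ⟨s.image fun i => (G i, c i), hne.image _, fun x => ?_⟩
  rw [Finset.sup'_image]
  rw [hEq]
  rfl

/-- Local exactness: near `w`, `f y - f w` is the max of `⟪v, y - w⟫` over finitely many
subgradients `v` of `f` at `w`. -/
lemma pa_local {d : ℕ} {f : E d → ℝ} (hconv : ConvexOn ℝ Set.univ f)
    (hPA : IsPiecewiseAffine f) (w : E d) :
    ∃ (A : Finset (E d × ℝ)) (hA : A.Nonempty) (δ : ℝ), 0 < δ ∧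
      (∀ p ∈ A, p.1 ∈ convexSubdiff f w) ∧
      ∀ y : E d, ‖y - w‖ < δ → f y - f w = A.sup' hA fun p => ⟪p.1, y - w⟫ := by
  classical
  obtain ⟨S, hS, hrep⟩ := pa_sup_rep hconv hPA
  set ℓ : E d × ℝ → E d → ℝ := fun p x => ⟪p.1, x⟫ + p.2 with hl_def
  have hlw : ∀ p, ∀ y : E d, ℓ p y = ℓ p w + ⟪p.1, y - w⟫ := by
    intro p y
    simp only [hl_def, inner_sub_right]
    ring
  have hle_f : ∀ p ∈ S, ∀ x, ℓ p x ≤ f x := by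
    intro p hp x
    rw [hrep x]
    exact Finset.le_sup' (fun q => ℓ q x) hp
  set A : Finset (E d × ℝ) := S.filter (fun p => ℓ p w = f w) with hA_def
  have hAne : A.Nonempty := by
    obtain ⟨p, hp, hpe⟩ := Finset.exists_mem_eq_sup' hS (fun q => ℓ q w)
    exact ⟨p, Finset.mem_filter.2 ⟨hp, by rw [hrep w, hpe]⟩⟩
  have hAsub : ∀ p ∈ A, p ∈ S := fun p hp => (Finset.mem_filter.1 hp).1
  have hAact : ∀ p ∈ A, ℓ p w = f w := fun p hp => (Finset.mem_filter.1 hp).2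
  have hAsubdiff : ∀ p ∈ A, p.1 ∈ convexSubdiff f w := by
    intro p hp y
    have := hle_f p (hAsub p hp) y
    rw [hlw p y, hAact p hp] at this
    exact this
  -- the constant M bounding gradients
  set Mc : ℝ := S.sup' hS (fun p => ‖p.1‖) with hMc_def
  have hMc0 : 0 ≤ Mc :=
    le_trans (norm_nonneg _) (Finset.le_sup' (fun p : E d × ℝ => ‖p.1‖) hS.choose_spec)
  have hinner_le : ∀ p ∈ S, ∀ u : E d, ⟪p.1, u⟫ ≤ Mc * ‖u‖ := by
    intro p hp u
    calc ⟪p.1, u⟫ ≤ ‖p.1‖ * ‖u‖ := real_inner_le_norm _ _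
      _ ≤ Mc * ‖u‖ := by
          apply mul_le_mul_of_nonneg_right _ (norm_nonneg u)
          exact Finset.le_sup' (fun q : E d × ℝ => ‖q.1‖) hp
  -- choose δ
  set B : Finset (E d × ℝ) := S.filter (fun p => ℓ p w < f w) with hB_def
  have hδex : ∃ δ : ℝ, 0 < δ ∧ ∀ p ∈ B, 2 * Mc * δ < f w - ℓ p w := by
    by_cases hB : B.Nonempty
    · set gap : ℝ := f w - B.sup' hB (fun p => ℓ p w) with hgap_def
      have hgap : 0 < gap := by
        rw [hgap_def, sub_pos]
        rw [Finset.sup'_lt_iff]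
        intro p hp
        exact (Finset.mem_filter.1 hp).2
      refine ⟨gap / (2 * Mc + 1), by positivity, fun p hp => ?_⟩
      have h1 : ℓ p w ≤ B.sup' hB (fun q => ℓ q w) := Finset.le_sup' (fun q => ℓ q w) hp
      have h2 : 2 * Mc * (gap / (2 * Mc + 1)) < gap := by
        rw [mul_div_assoc']
        rw [div_lt_iff₀ (by positivity)]
        nlinarith
      have h3 : gap ≤ f w - ℓ p w := by rw [hgap_def]; linarith
      calc 2 * Mc * (gap / (2 * Mc + 1)) < gap := h2
        _ ≤ f w - ℓ p w := h3
    · exact ⟨1, one_pos, fun p hp => absurd ⟨p, hp⟩ hB⟩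
  obtain ⟨δ, hδ, hδB⟩ := hδex
  refine ⟨A, hAne, δ, hδ, hAsubdiff, fun y hy => ?_⟩
  -- on the ball, the sup over S equals the sup over A
  have hball : S.sup' hS (fun p => ℓ p y) = A.sup' hAne (fun p => ℓ p y) := by
    apply le_antisymm
    · apply Finset.sup'_le
      intro p hp
      by_cases hpA : p ∈ A
      · exact Finset.le_sup' (fun q => ℓ q y) hpA
      · have hpB : p ∈ B := by
          refine Finset.mem_filter.2 ⟨hp, ?_⟩
          have := hle_f p hp w
          cases lt_or_eq_of_le this with
          | inl h => exact h
          | inr h => exact absurd (Finset.mem_filter.2 ⟨hp, h⟩) hpA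
        obtain ⟨q, hq⟩ := hAne
        refine le_trans ?_ (Finset.le_sup' (fun r => ℓ r y) hq)
        have e1 : ℓ p y ≤ ℓ p w + Mc * ‖y - w‖ := by
          rw [hlw p y]
          exact add_le_add_right (hinner_le p hp _) _
        have e2 : f w - Mc * ‖y - w‖ ≤ ℓ q y := by
          rw [hlw q y, hAact q hq]
          have := hinner_le q (hAsub q hq) (w - y)
          have hswap : ⟪q.1, w - y⟫ = -⟪q.1, y - w⟫ := by
            rw [← inner_neg_right, neg_sub]
          rw [hswap] at this
          have hnn : ‖w - y‖ = ‖y - w‖ := norm_sub_rev _ _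
          rw [hnn] at this
          linarith
        have e3 : 2 * Mc * ‖y - w‖ < f w - ℓ p w := by
          have := hδB p hpB
          nlinarith [norm_nonneg (y - w), hMc0]
        linarith
    · apply Finset.sup'_le
      intro p hp
      exact Finset.le_sup' (fun q => ℓ q y) (hAsub p hp)
  have hcomp := Finset.comp_sup'_eq_sup'_comp hAne (f := fun p => ℓ p y)
    (fun x : ℝ => x - f w) (fun a b => (max_sub_sub_right a b (f w)).symm)
  simp only [Function.comp] at hcomp
  rw [hrep y, hball, hcomp]
  apply Finset.sup'_congr hAne rfl
  intro p hp
  rw [hlw p y, hAact p hp]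
  ring

theorem frechet_zero_iff_subdiff_subset {d : ℕ} (h g : E d → ℝ)
    (hconv : ConvexOn ℝ Set.univ h) (gconv : ConvexOn ℝ Set.univ g)
    (hPA : IsPiecewiseAffine h) (gPA : IsPiecewiseAffine g) (w : E d) :
    (0 : E d) ∈ frechetSubdiff (fun x => h x - g x) w ↔
      convexSubdiff g w ⊆ convexSubdiff h w := by
  classical
  obtain ⟨A, hA, δ₁, hδ₁, hAsub, hAloc⟩ := pa_local hconv hPA w
  obtain ⟨B, hB, δ₂, hδ₂, hBsub, hBloc⟩ := pa_local gconv gPA w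
  -- positive homogeneity of the two local sups
  have hph : ∀ (t : ℝ), 0 ≤ t → ∀ u : E d,
      (A.sup' hA fun r => ⟪r.1, t • u⟫) = t * A.sup' hA fun r => ⟪r.1, u⟫ := by
    intro t ht u
    have hcomp := Finset.comp_sup'_eq_sup'_comp hA (f := fun r : E d × ℝ => ⟪r.1, u⟫)
      (fun x : ℝ => t * x) (fun a b => mul_max_of_nonneg a b ht)
    simp only [Function.comp] at hcomp
    rw [hcomp]
    exact Finset.sup'_congr hA rfl (fun r _ => real_inner_smul_right _ _ _)
  have hqh : ∀ (t : ℝ), 0 ≤ t → ∀ u : E d,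
      (B.sup' hB fun r => ⟪r.1, t • u⟫) = t * B.sup' hB fun r => ⟪r.1, u⟫ := by
    intro t ht u
    have hcomp := Finset.comp_sup'_eq_sup'_comp hB (f := fun r : E d × ℝ => ⟪r.1, u⟫)
      (fun x : ℝ => t * x) (fun a b => mul_max_of_nonneg a b ht)
    simp only [Function.comp] at hcomp
    rw [hcomp]
    exact Finset.sup'_congr hB rfl (fun r _ => real_inner_smul_right _ _ _)
  -- subgradients of g are dominated by the local sup of g
  have hsq : ∀ s ∈ convexSubdiff g w, ∀ u : E d,
      ⟪s, u⟫ ≤ B.sup' hB fun r => ⟪r.1, u⟫ := by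
    intro s hs u
    set t : ℝ := δ₂ / (2 * (‖u‖ + 1)) with ht_def
    have ht : 0 < t := by positivity
    have htu : ‖(w + t • u) - w‖ < δ₂ := by
      rw [add_sub_cancel_left, norm_smul, Real.norm_eq_abs, abs_of_pos ht, ht_def]
      rw [div_mul_eq_mul_div, div_lt_iff₀ (by positivity)]
      nlinarith [norm_nonneg u]
    have hloc := hBloc (w + t • u) htu
    rw [add_sub_cancel_left, hqh t ht.le u] at hloc
    have hsub := hs (w + t • u)
    rw [add_sub_cancel_left, real_inner_smul_right] at hsub
    have hmul : t * ⟪s, u⟫ ≤ t * B.sup' hB fun r => ⟪r.1, u⟫ := by linarith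
    exact le_of_mul_le_mul_left hmul ht
  constructor
  · -- forward direction
    intro hF s hs
    intro y
    by_cases hyw : y = w
    · subst hyw; simp
    · have hu : y - w ≠ 0 := sub_ne_zero.2 hyw
      have hun : 0 < ‖y - w‖ := norm_pos_iff.2 hu
      -- claim : sup over B ≤ sup over A in direction y - w
      have hqp : (B.sup' hB fun r => ⟪r.1, y - w⟫) ≤ A.sup' hA fun r => ⟪r.1, y - w⟫ := by
        have key : ∀ ε : ℝ, 0 < ε →
            (B.sup' hB fun r => ⟪r.1, y - w⟫) ≤
              (A.sup' hA fun r => ⟪r.1, y - w⟫) + ε * ‖y - w‖ := by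
          intro ε hε
          have hev := hF ε hε
          rw [eventually_nhdsWithin_iff, Metric.eventually_nhds_iff] at hev
          obtain ⟨r, hr, hball⟩ := hev
          set t : ℝ := min r (min δ₁ δ₂) / (2 * (‖y - w‖ + 1)) with ht_def
          have hmin : 0 < min r (min δ₁ δ₂) := lt_min hr (lt_min hδ₁ hδ₂)
          have ht : 0 < t := by positivity
          have htu : ‖t • (y - w)‖ < min r (min δ₁ δ₂) := by
            rw [norm_smul, Real.norm_eq_abs, abs_of_pos ht, ht_def]
            rw [div_mul_eq_mul_div, div_lt_iff₀ (by positivity)]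
            nlinarith [norm_nonneg (y - w)]
          set z : E d := w + t • (y - w) with hz_def
          have hz_sub : z - w = t • (y - w) := by rw [hz_def]; abel
          have hzw : z ≠ w := by
            rw [hz_def]
            intro e
            have he : t • (y - w) = 0 := by
              have := congrArg (fun v => v - w) e
              simpa using this
            exact (smul_ne_zero ht.ne' hu) he
          have hzd : dist z w < r := by
            rw [dist_eq_norm, hz_sub]
            exact lt_of_lt_of_le htu (min_le_left _ _)
          have hineq := hball hzd (by simpa using hzw)
          rw [hz_sub] at hineq
          have hz1 : ‖z - w‖ < δ₁ := by
            rw [hz_sub]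
            exact lt_of_lt_of_le htu (le_trans (min_le_right _ _) (min_le_left _ _))
          have hz2 : ‖z - w‖ < δ₂ := by
            rw [hz_sub]
            exact lt_of_lt_of_le htu (le_trans (min_le_right _ _) (min_le_right _ _))
          have hh := hAloc z hz1
          have hg := hBloc z hz2
          rw [hz_sub, hph t ht.le (y - w)] at hh
          rw [hz_sub, hqh t ht.le (y - w)] at hg
          rw [inner_zero_left, norm_smul, Real.norm_eq_abs, abs_of_pos ht] at hineq
          have hineq' : -ε * (t * ‖y - w‖) ≤ (h z - g z) - (h w - g w) - 0 := hineq
          -- hineq : -ε * (t * ‖y - w‖) ≤ (h z - g z) - (h w - g w) - 0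
          have hmul : t * (B.sup' hB fun r => ⟪r.1, y - w⟫)
              ≤ t * ((A.sup' hA fun r => ⟪r.1, y - w⟫) + ε * ‖y - w‖) := by
            nlinarith [hineq', hh, hg]
          exact le_of_mul_le_mul_left hmul ht
        by_contra hcon
        push_neg at hcon
        set D : ℝ := (B.sup' hB fun r => ⟪r.1, y - w⟫)
          - (A.sup' hA fun r => ⟪r.1, y - w⟫) with hD_def
        have hD : 0 < D := by rw [hD_def]; linarith
        have hε : 0 < D / (2 * ‖y - w‖) := by positivity
        have hk := key _ hε
        have he : D / (2 * ‖y - w‖) * ‖y - w‖ = D / 2 := by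
          field_simp
        rw [he] at hk
        rw [hD_def] at hD hk
        linarith
      -- conclude
      obtain ⟨r, hr, hre⟩ := Finset.exists_mem_eq_sup' hA (fun r : E d × ℝ => ⟪r.1, y - w⟫)
      have h1 : ⟪s, y - w⟫ ≤ A.sup' hA fun r => ⟪r.1, y - w⟫ :=
        le_trans (hsq s hs (y - w)) hqp
      have h2 := hAsub r hr y
      rw [hre] at h1
      linarith
  · -- reverse direction
    intro hsub ε hε
    have hkey : ∀ y : E d, ‖y - w‖ < min δ₁ δ₂ →
        0 ≤ (h y - g y) - (h w - g w) := by
      intro y hy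
      have hg := hBloc y (lt_of_lt_of_le hy (min_le_right _ _))
      obtain ⟨r, hr, hre⟩ := Finset.exists_mem_eq_sup' hB (fun r : E d × ℝ => ⟪r.1, y - w⟫)
      have hrg : r.1 ∈ convexSubdiff g w := hBsub r hr
      have hrh : r.1 ∈ convexSubdiff h w := hsub hrg
      have hhy := hrh y
      have hgy : g y - g w = ⟪r.1, y - w⟫ := by rw [hg, hre]
      linarith
    apply Filter.Eventually.filter_mono nhdsWithin_le_nhds
    have hball : Metric.ball w (min δ₁ δ₂) ∈ nhds w :=
      Metric.ball_mem_nhds w (lt_min hδ₁ hδ₂)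
    filter_upwards [hball] with y hy
    have hyw : ‖y - w‖ < min δ₁ δ₂ := by
      rw [← dist_eq_norm]; exact hy
    have hk := hkey y hyw
    rw [inner_zero_left]
    nlinarith [norm_nonneg (y - w), hε.le]
end
end
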